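/- (No Advantage for Nonlocal Computation for Q¹, modulo the classical bound) Let P(a,b|x,y) ∈ Q¹ with binary outcomes, witnessed by unit vectors |φ⟩, |a,x⟩, |b,y⟩ with ⟨a,x|a',x⟩ = P(a|x)δ_{aa'}, ⟨b,y|b',y⟩ = P(b|y)δ_{bb'}, ⟨a,x|b,y⟩ = P(a,b|x,y). Then the average success probability P_{Q¹}(f) = 2^{−n} Σ_{x,y} p̃(x⊕y) P(a⊕b = f(x⊕y)|x,y) satisfies P_{Q¹}(f) ≤ (1 + ‖Φ‖)/2, where Φ = Σ_{x,y} (−1)^{f(x⊕y)} p̃(x⊕y) |x⟩⟨y| and ‖·‖ is the operator norm. -/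

import Mathlib

open Finset

set_option maxHeartbeats 1000000

local notation "⟪" x ", " y "⟫" => @inner ℝ _ _ x y

lemma bilinear_opNorm_bound {ι : Type*} [Fintype ι] [DecidableEq ι]
    {H : Type*} [NormedAddCommGroup H] [InnerProductSpace ℝ H]
    (M : Matrix ι ι ℝ) (u v : ι → H)
    (hu : ∀ x, ‖u x‖ ≤ 1) (hv : ∀ y, ‖v y‖ ≤ 1) :
    ∑ x, ∑ y, M x y * ⟪u x, v y⟫ ≤
      ‖LinearMap.toContinuousLinearMap (Matrix.toEuclideanLin M)‖ * Fintype.card ι := by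
  classical
  set T := LinearMap.toContinuousLinearMap (Matrix.toEuclideanLin M) with hTdef
  have hT : ∀ (w : EuclideanSpace ℝ ι) x, T w x = ∑ y, M x y * w y := by
    intro w x
    simp [hTdef, Matrix.toEuclideanLin, Matrix.mulVec, dotProduct]
  set S : Submodule ℝ H := Submodule.span ℝ (Set.range u ∪ Set.range v) with hS
  haveI : FiniteDimensional ℝ S :=
    FiniteDimensional.span_of_finite ℝ ((Set.finite_range u).union (Set.finite_range v))
  set b := stdOrthonormalBasis ℝ S with hb
  have hmemu : ∀ x, u x ∈ S := fun x => Submodule.subset_span (Or.inl ⟨x, rfl⟩)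
  have hmemv : ∀ y, v y ∈ S := fun y => Submodule.subset_span (Or.inr ⟨y, rfl⟩)
  set u' : ι → S := fun x => ⟨u x, hmemu x⟩ with hu'
  set v' : ι → S := fun y => ⟨v y, hmemv y⟩ with hv'
  set d := Module.finrank ℝ S
  set A : Fin d → EuclideanSpace ℝ ι := fun k => WithLp.toLp 2 (fun x => ⟪u' x, b k⟫) with hA
  set B : Fin d → EuclideanSpace ℝ ι := fun k => WithLp.toLp 2 (fun y => ⟪b k, v' y⟫) with hB
  have hnormA : ∀ k, ‖A k‖ ^ 2 = ∑ x, (A k x) ^ 2 := by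
    intro k
    rw [← real_inner_self_eq_norm_sq, PiLp.inner_apply]
    simp [sq, RCLike.inner_apply]
  have hnormB : ∀ k, ‖B k‖ ^ 2 = ∑ y, (B k y) ^ 2 := by
    intro k
    rw [← real_inner_self_eq_norm_sq, PiLp.inner_apply]
    simp [sq, RCLike.inner_apply]
  have step1 : ∑ x, ∑ y, M x y * ⟪u x, v y⟫ = ∑ k, ⟪A k, T (B k)⟫ := by
    have huv : ∀ x y, ⟪u x, v y⟫ = ∑ k, A k x * B k y := by
      intro x y
      rw [show ⟪u x, v y⟫ = ⟪u' x, v' y⟫ from (Submodule.coe_inner S (u' x) (v' y)).symm,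
        ← b.sum_inner_mul_inner (u' x) (v' y)]
    calc ∑ x, ∑ y, M x y * ⟪u x, v y⟫
        = ∑ x, ∑ y, ∑ k, A k x * (M x y * B k y) := by
          simp_rw [huv, Finset.mul_sum]
          congr 1; ext x; congr 1; ext y; congr 1; ext k; ring
      _ = ∑ x, ∑ k, ∑ y, A k x * (M x y * B k y) :=
          Finset.sum_congr rfl (fun x _ => Finset.sum_comm)
      _ = ∑ k, ∑ x, ∑ y, A k x * (M x y * B k y) := Finset.sum_comm
      _ = ∑ k, ⟪A k, T (B k)⟫ := by
          congr 1; ext k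
          rw [PiLp.inner_apply]
          simp [hT, RCLike.inner_apply, Finset.mul_sum, Finset.sum_mul, mul_comm, mul_left_comm, mul_assoc]
  have step2 : ∀ k, ⟪A k, T (B k)⟫ ≤ ‖T‖ * (‖A k‖ * ‖B k‖) := by
    intro k
    calc ⟪A k, T (B k)⟫ ≤ ‖A k‖ * ‖T (B k)‖ := real_inner_le_norm _ _
      _ ≤ ‖A k‖ * (‖T‖ * ‖B k‖) := by
          gcongr
          exact T.le_opNorm _
      _ = ‖T‖ * (‖A k‖ * ‖B k‖) := by ring
  have hsumA : ∑ k, ‖A k‖ ^ 2 ≤ Fintype.card ι := by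
    have : ∀ x, ∑ k, (A k x) ^ 2 = ‖u x‖ ^ 2 := by
      intro x
      have := b.sum_inner_mul_inner (u' x) (u' x)
      rw [Submodule.coe_inner, real_inner_self_eq_norm_sq] at this
      simp only [hA]
      calc ∑ k, (⟪u' x, b k⟫ : ℝ) ^ 2
          = ∑ k, (⟪u' x, b k⟫ : ℝ) * ⟪b k, u' x⟫ := by
            congr 1; ext k; rw [sq, real_inner_comm (b k) (u' x)]
        _ = ‖(u' x : H)‖ ^ 2 := this
    have h1 : ∑ k, ‖A k‖ ^ 2 = ∑ x, ‖u x‖ ^ 2 := by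
      simp_rw [hnormA]
      rw [Finset.sum_comm]
      simp_rw [this]
    rw [h1]
    calc ∑ x : ι, ‖u x‖ ^ 2 ≤ ∑ _x : ι, (1:ℝ) := by
          apply Finset.sum_le_sum
          intro x _
          nlinarith [hu x, norm_nonneg (u x)]
      _ = Fintype.card ι := by simp
  have hsumB : ∑ k, ‖B k‖ ^ 2 ≤ Fintype.card ι := by
    have : ∀ y, ∑ k, (B k y) ^ 2 = ‖v y‖ ^ 2 := by
      intro y
      have := b.sum_inner_mul_inner (v' y) (v' y)
      rw [Submodule.coe_inner, real_inner_self_eq_norm_sq] at this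
      simp only [hB]
      calc ∑ k, (⟪b k, v' y⟫ : ℝ) ^ 2
          = ∑ k, (⟪v' y, b k⟫ : ℝ) * ⟪b k, v' y⟫ := by
            congr 1; ext k; rw [sq, real_inner_comm (b k) (v' y)]
        _ = ‖(v' y : H)‖ ^ 2 := this
    have h1 : ∑ k, ‖B k‖ ^ 2 = ∑ y, ‖v y‖ ^ 2 := by
      simp_rw [hnormB]
      rw [Finset.sum_comm]
      simp_rw [this]
    rw [h1]
    calc ∑ y : ι, ‖v y‖ ^ 2 ≤ ∑ _y : ι, (1:ℝ) := by
          apply Finset.sum_le_sum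
          intro y _
          nlinarith [hv y, norm_nonneg (v y)]
      _ = Fintype.card ι := by simp
  have hCS : ∑ k, ‖A k‖ * ‖B k‖ ≤ Fintype.card ι := by
    have h := sum_mul_sq_le_sq_mul_sq Finset.univ (fun k => ‖A k‖) (fun k => ‖B k‖)
    have hnn : (0:ℝ) ≤ ∑ k, ‖A k‖ * ‖B k‖ :=
      Finset.sum_nonneg fun k _ => mul_nonneg (norm_nonneg _) (norm_nonneg _)
    have hcard : (0:ℝ) ≤ Fintype.card ι := Nat.cast_nonneg _
    nlinarith [hsumA, hsumB, Finset.sum_nonneg (fun k (_ : k ∈ Finset.univ) => sq_nonneg ‖A k‖),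
      Finset.sum_nonneg (fun k (_ : k ∈ Finset.univ) => sq_nonneg ‖B k‖)]
  calc ∑ x, ∑ y, M x y * ⟪u x, v y⟫ = ∑ k, ⟪A k, T (B k)⟫ := step1
    _ ≤ ∑ k, ‖T‖ * (‖A k‖ * ‖B k‖) := Finset.sum_le_sum fun k _ => step2 k
    _ = ‖T‖ * ∑ k, ‖A k‖ * ‖B k‖ := by rw [Finset.mul_sum]
    _ ≤ ‖T‖ * Fintype.card ι := mul_le_mul_of_nonneg_left hCS (norm_nonneg _)



/-- The matrix `Φ = Σ_{x,y} (−1)^{f(x⊕y)} p̃(x⊕y) |x⟩⟨y|` of the nonlocal-computation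
argument. -/
noncomputable def PhiMat {n : ℕ} (f : (Fin n → Bool) → Bool)
    (pt : (Fin n → Bool) → ℝ) : Matrix (Fin n → Bool) (Fin n → Bool) ℝ :=
  fun x y => (if f (fun i => xor (x i) (y i)) then -1 else 1) * pt (fun i => xor (x i) (y i))

/-- No Advantage for Nonlocal Computation for `Q¹`, modulo the classical
bound: for a binary-outcome distribution in `Q¹`, witnessed by Gram vectors `|a,x⟩`,
`|b,y⟩` and probabilities `PA`, `PB`, `Pj`, the average success probability of the
nonlocal computation of `f` with prior `p̃` is bounded by `(1 + ‖Φ‖)/2`, where `‖Φ‖` is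
the operator norm of `Φ`. -/
theorem q1_no_advantage_nonlocal_computation
    {n : ℕ} {H : Type*} [NormedAddCommGroup H] [InnerProductSpace ℝ H]
    (va vb : Bool → (Fin n → Bool) → H)
    (PA PB : Bool → (Fin n → Bool) → ℝ)
    (Pj : Bool → Bool → (Fin n → Bool) → (Fin n → Bool) → ℝ)
    (pt : (Fin n → Bool) → ℝ) (f : (Fin n → Bool) → Bool)
    (hga : ∀ a a' x, (inner ℝ (va a x) (va a' x) : ℝ) = if a = a' then PA a x else 0)
    (hgb : ∀ b b' y, (inner ℝ (vb b y) (vb b' y) : ℝ) = if b = b' then PB b y else 0)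
    (hgab : ∀ a b x y, (inner ℝ (va a x) (vb b y) : ℝ) = Pj a b x y)
    (hPAnorm : ∀ x, ∑ a : Bool, PA a x = 1)
    (hPBnorm : ∀ y, ∑ b : Bool, PB b y = 1)
    (hjnorm : ∀ x y, ∑ a : Bool, ∑ b : Bool, Pj a b x y = 1)
    (hpt : ∀ z, 0 ≤ pt z) (hptsum : ∑ z : Fin n → Bool, pt z = 1) :
    (1 / 2 ^ n) * ∑ x : Fin n → Bool, ∑ y : Fin n → Bool,
        pt (fun i => xor (x i) (y i)) *
          (∑ a : Bool, ∑ b : Bool,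
            if xor a b = f (fun i => xor (x i) (y i)) then Pj a b x y else 0)
      ≤ (1 + ‖LinearMap.toContinuousLinearMap (Matrix.toEuclideanLin (PhiMat f pt))‖) / 2 := by
  classical
  set T := LinearMap.toContinuousLinearMap (Matrix.toEuclideanLin (PhiMat f pt)) with hTdef
  set u : (Fin n → Bool) → H := fun x => va false x - va true x with hu
  set v : (Fin n → Bool) → H := fun y => vb false y - vb true y with hv
  have hnu : ∀ x, ‖u x‖ ≤ 1 := by
    intro x
    have h1 : ⟪u x, u x⟫ = 1 := by
      have := hPAnorm x
      rw [Fintype.sum_bool] at this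
      simp only [hu, inner_sub_left, inner_sub_right, hga, Bool.false_eq_true, Bool.true_eq_false, if_true, if_false]
      linarith
    rw [real_inner_self_eq_norm_sq] at h1
    nlinarith [norm_nonneg (u x)]
  have hnv : ∀ y, ‖v y‖ ≤ 1 := by
    intro y
    have h1 : ⟪v y, v y⟫ = 1 := by
      have := hPBnorm y
      rw [Fintype.sum_bool] at this
      simp only [hv, inner_sub_left, inner_sub_right, hgb, Bool.false_eq_true, Bool.true_eq_false, if_true, if_false]
      linarith
    rw [real_inner_self_eq_norm_sq] at h1
    nlinarith [norm_nonneg (v y)]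
  have hinner : ∀ x y, ⟪u x, v y⟫ =
      Pj false false x y - Pj false true x y - Pj true false x y + Pj true true x y := by
    intro x y
    simp [hu, hv, inner_sub_left, inner_sub_right, hgab]
    ring
  have hper : ∀ x y : Fin n → Bool,
      pt (fun i => xor (x i) (y i)) *
          (∑ a : Bool, ∑ b : Bool,
            if xor a b = f (fun i => xor (x i) (y i)) then Pj a b x y else 0)
        = (pt (fun i => xor (x i) (y i)) + PhiMat f pt x y * ⟪u x, v y⟫) / 2 := by
    intro x y
    have h1 := hjnorm x y
    simp only [Fintype.sum_bool] at h1 ⊢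
    rw [hinner]
    unfold PhiMat
    have h2 : pt (fun i => xor (x i) (y i)) *
        (Pj true true x y + Pj true false x y + (Pj false true x y + Pj false false x y))
        = pt (fun i => xor (x i) (y i)) := by rw [h1]; ring
    cases hf : f (fun i => xor (x i) (y i)) <;> simp [hf] <;> ring_nf <;> ring_nf at h2 <;>
      linarith [h2]
  have hcard : (Fintype.card (Fin n → Bool) : ℝ) = 2 ^ n := by
    rw [Fintype.card_fun]
    push_cast
    simp
  have key : ∑ x : Fin n → Bool, ∑ y : Fin n → Bool, PhiMat f pt x y * ⟪u x, v y⟫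
      ≤ ‖T‖ * 2 ^ n := by
    have := bilinear_opNorm_bound (PhiMat f pt) u v hnu hnv
    rwa [hcard, ← hTdef] at this
  have hEpt : ∑ x : Fin n → Bool, ∑ y : Fin n → Bool, pt (fun i => xor (x i) (y i))
      = 2 ^ n := by
    have hx : ∀ x : Fin n → Bool,
        ∑ y : Fin n → Bool, pt (fun i => xor (x i) (y i)) = 1 := by
      intro x
      have hb : Function.Bijective (fun y : Fin n → Bool => fun i => xor (x i) (y i)) := by
        apply Function.Involutive.bijective
        intro y
        funext i
        simp
      calc ∑ y : Fin n → Bool, pt (fun i => xor (x i) (y i))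
          = ∑ z : Fin n → Bool, pt z :=
            Fintype.sum_bijective _ hb _ _ (fun y => rfl)
        _ = 1 := hptsum
    simp_rw [hx]
    rw [Finset.sum_const]
    simp only [Finset.card_univ, nsmul_eq_mul, mul_one]
    exact hcard
  have hEq : ∑ x : Fin n → Bool, ∑ y : Fin n → Bool,
        pt (fun i => xor (x i) (y i)) *
          (∑ a : Bool, ∑ b : Bool,
            if xor a b = f (fun i => xor (x i) (y i)) then Pj a b x y else 0)
      = ((2:ℝ) ^ n + ∑ x : Fin n → Bool, ∑ y : Fin n → Bool,
          PhiMat f pt x y * ⟪u x, v y⟫) / 2 := by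
    simp_rw [hper, ← Finset.sum_div, Finset.sum_add_distrib]
    rw [hEpt]
  rw [hEq]
  have h2n : (0:ℝ) < 2 ^ n := by positivity
  set E := ∑ x : Fin n → Bool, ∑ y : Fin n → Bool, PhiMat f pt x y * ⟪u x, v y⟫
  have hfrac : E / 2 ^ n ≤ ‖T‖ := (div_le_iff₀ h2n).mpr key
  have heq2 : (1 / 2 ^ n : ℝ) * ((2 ^ n + E) / 2) = (1 + E / 2 ^ n) / 2 := by
    field_simp
  rw [heq2]
  linarith
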